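/- Any non-graph admissible curve γ satisfies E[γ] > 2πε√α. Consequently, if 4ε²α ≥ 1, any global minimizer of E is a graph curve. -/

import Mathlib

open MeasureTheory Real Set

noncomputable section


/-- The (signed) curvature of a planar curve `γ` at parameter `t`. -/
def curvature (γ : ℝ → ℝ × ℝ) (t : ℝ) : ℝ :=
  ((deriv γ t).1 * (deriv (deriv γ) t).2 - (deriv γ t).2 * (deriv (deriv γ) t).1)
    / ‖deriv γ t‖ ^ 3

/-- Admissible curves above the substrate ψ: regular curves of Sobolev class H²
(modelled as C²) confined in the closed epigraph of ψ, satisfying the periodic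
boundary conditions x(0)=0, x(1)=1, y(0)=y(1), γ'(0)=γ'(1). -/
def Admissible (ψ : ℝ → ℝ) (γ : ℝ → ℝ × ℝ) : Prop :=
  ContDiff ℝ 2 γ ∧ (∀ t ∈ Icc (0:ℝ) 1, deriv γ t ≠ 0) ∧
  (∀ t ∈ Icc (0:ℝ) 1, ψ (γ t).1 ≤ (γ t).2) ∧
  (γ 0).1 = 0 ∧ (γ 1).1 = 1 ∧ (γ 0).2 = (γ 1).2 ∧ deriv γ 0 = deriv γ 1

/-- The contact potential: Θ = α on the graph of ψ, Θ = 1 off it. -/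
def contactPotential (ψ : ℝ → ℝ) (α : ℝ) (p : ℝ × ℝ) : ℝ :=
  if p.2 = ψ p.1 then α else 1

/-- Total energy of one period: E[γ] = ∫ [ε²κ² + Θ(γ)] ds. -/
def Energy (ψ : ℝ → ℝ) (α ε : ℝ) (γ : ℝ → ℝ × ℝ) : ℝ :=
  ∫ t in Icc (0:ℝ) 1, (ε ^ 2 * curvature γ t ^ 2 + contactPotential ψ α (γ t)) * ‖deriv γ t‖

/-- Length of one period of the curve. -/
def Length (γ : ℝ → ℝ × ℝ) : ℝ := ∫ t in Icc (0:ℝ) 1, ‖deriv γ t‖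

/-- A curve is a graph curve if x'(t) > 0 for all t. -/
def IsGraph (γ : ℝ → ℝ × ℝ) : Prop := ∀ t ∈ Icc (0:ℝ) 1, 0 < (deriv γ t).1



/-- Angular speed (rate of change of tangent angle) of a planar curve. -/
def omg (γ : ℝ → ℝ × ℝ) (t : ℝ) : ℝ :=
  ((deriv γ t).1 * (deriv (deriv γ) t).2 - (deriv γ t).2 * (deriv (deriv γ) t).1) /
    ((deriv γ t).1 ^ 2 + (deriv γ t).2 ^ 2)

/-- Tangent angle obtained by integrating the angular speed. -/
def th (γ : ℝ → ℝ × ℝ) (φ₀ : ℝ) (t : ℝ) : ℝ := φ₀ + ∫ s in (0:ℝ)..t, omg γ s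

set_option maxHeartbeats 1000000 in
theorem turning_gt_pi (γ : ℝ → ℝ × ℝ) (hC2 : ContDiff ℝ 2 γ)
    (hne : ∀ t ∈ Icc (0:ℝ) 1, deriv γ t ≠ 0)
    (hx0 : (γ 0).1 = 0) (hx1 : (γ 1).1 = 1) (hy : (γ 0).2 = (γ 1).2)
    (hdper : deriv γ 0 = deriv γ 1)
    (t₀ : ℝ) (ht₀ : t₀ ∈ Icc (0:ℝ) 1) (ht₀' : (deriv γ t₀).1 ≤ 0) :
    π < ∫ t in (0:ℝ)..1, |omg γ t| := by
  -- basic differentiability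
  have hreg : Differentiable ℝ γ ∧ Differentiable ℝ (deriv γ) ∧ Continuous (deriv (deriv γ)) := by
    rw [show (2 : WithTop ℕ∞) = 1 + 1 from rfl, contDiff_succ_iff_deriv] at hC2
    obtain ⟨h1, -, h2⟩ := hC2
    rw [contDiff_one_iff_deriv] at h2
    exact ⟨h1, h2.1, h2.2⟩
  obtain ⟨hd1, hd2, hc2⟩ := hreg
  have hc1 : Continuous (deriv γ) := hd2.continuous
  -- open neighborhood where deriv γ ≠ 0
  obtain ⟨δ, hδ, hthick⟩ : ∃ δ > 0, Metric.thickening δ (Icc (0:ℝ) 1) ⊆ {t | deriv γ t ≠ 0} := by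
    apply isCompact_Icc.exists_thickening_subset_open
    · exact isOpen_ne.preimage hc1
    · exact hne
  set a : ℝ := -(δ/2) with ha_def
  set b : ℝ := 1 + δ/2 with hb_def
  have hab : Icc (0:ℝ) 1 ⊆ Ioo a b := by
    intro t ht
    exact ⟨by simp only [ha_def]; linarith [ht.1], by simp only [hb_def]; linarith [ht.2]⟩
  have hIoo_ne : ∀ t ∈ Ioo a b, deriv γ t ≠ 0 := by
    intro t ht
    apply hthick
    rw [Metric.mem_thickening_iff]
    refine ⟨max 0 (min 1 t), ⟨le_max_left _ _, ?_⟩, ?_⟩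
    · rcases le_total 1 t with h | h
      · simp [min_eq_left h]
      · exact max_le zero_le_one (le_trans (min_le_left _ _) le_rfl)
    · rw [Real.dist_eq]
      have h1 := ht.1; have h2 := ht.2
      rcases le_total t 0 with h | h
      · rw [min_eq_right (by linarith), max_eq_left (by linarith)]
        rw [abs_of_nonpos (by linarith)]
        simp only [ha_def] at h1; linarith
      · rcases le_total t 1 with h' | h'
        · rw [min_eq_right h', max_eq_right h]
          simp [abs_of_nonneg (le_refl (0:ℝ))]; linarith
        · rw [min_eq_left h', max_eq_right zero_le_one]
          rw [abs_of_nonneg (by linarith)]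
          simp only [hb_def] at h2; linarith
  -- component derivative functions
  set x' : ℝ → ℝ := fun t => (deriv γ t).1 with hx'_def
  set y' : ℝ → ℝ := fun t => (deriv γ t).2 with hy'_def
  set x'' : ℝ → ℝ := fun t => (deriv (deriv γ) t).1 with hx''_def
  set y'' : ℝ → ℝ := fun t => (deriv (deriv γ) t).2 with hy''_def
  set Q : ℝ → ℝ := fun t => x' t ^ 2 + y' t ^ 2 with hQ_def
  have hx'c : Continuous x' := (continuous_fst).comp hc1
  have hy'c : Continuous y' := (continuous_snd).comp hc1
  have hx''c : Continuous x'' := (continuous_fst).comp hc2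
  have hy''c : Continuous y'' := (continuous_snd).comp hc2
  have hQc : Continuous Q := by continuity
  have hQpos : ∀ t ∈ Ioo a b, 0 < Q t := by
    intro t ht
    have h := hIoo_ne t ht
    have : x' t ≠ 0 ∨ y' t ≠ 0 := by
      by_contra hcon
      push_neg at hcon
      exact h (Prod.ext hcon.1 hcon.2)
    rcases this with h' | h' <;> positivity
  have homg_eq : ∀ t, omg γ t = (x' t * y'' t - y' t * x'' t) / Q t := fun t => rfl
  have homg_contOn : ContinuousOn (omg γ) (Ioo a b) := by
    intro t ht
    apply ContinuousAt.continuousWithinAt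
    exact ((hx'c.mul hy''c).sub (hy'c.mul hx''c)).continuousAt.div
      hQc.continuousAt (ne_of_gt (hQpos t ht))
  have homg_int : ∀ s u : ℝ, s ∈ Ioo a b → u ∈ Ioo a b →
      IntervalIntegrable (omg γ) volume s u := by
    intro s u hs hu
    apply ContinuousOn.intervalIntegrable
    refine homg_contOn.mono (fun z hz => ?_)
    rcases le_total s u with h | h
    · rw [uIcc_of_le h] at hz
      exact ⟨lt_of_lt_of_le hs.1 hz.1, lt_of_le_of_lt hz.2 hu.2⟩
    · rw [uIcc_of_ge h] at hz
      exact ⟨lt_of_lt_of_le hu.1 hz.1, lt_of_le_of_lt hz.2 hs.2⟩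
  have h0ab : (0:ℝ) ∈ Ioo a b := hab ⟨le_refl 0, zero_le_one⟩
  have h1ab : (1:ℝ) ∈ Ioo a b := hab ⟨zero_le_one, le_refl 1⟩
  -- derivative of theta
  have hth_deriv : ∀ φ₀ : ℝ, ∀ t ∈ Ioo a b, HasDerivAt (th γ φ₀) (omg γ t) t := by
    intro φ₀ t ht
    have : HasDerivAt (fun u => ∫ s in (0:ℝ)..u, omg γ s) (omg γ t) t :=
      intervalIntegral.integral_hasDerivAt_right (homg_int 0 t h0ab ht)
        (homg_contOn.stronglyMeasurableAtFilter isOpen_Ioo t ht)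
        ((homg_contOn t ht).continuousAt (isOpen_Ioo.mem_nhds ht))
    exact this.const_add φ₀
  -- r, u, v
  set r : ℝ → ℝ := fun t => Real.sqrt (Q t) with hr_def
  have hrpos : ∀ t ∈ Ioo a b, 0 < r t := fun t ht => Real.sqrt_pos.mpr (hQpos t ht)
  have hr_sq : ∀ t ∈ Ioo a b, r t ^ 2 = Q t := fun t ht => Real.sq_sqrt (hQpos t ht).le
  set u : ℝ → ℝ := fun t => x' t / r t with hu_def
  set v : ℝ → ℝ := fun t => y' t / r t with hv_def
  have huv_sq : ∀ t ∈ Ioo a b, u t ^ 2 + v t ^ 2 = 1 := by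
    intro t ht
    have h1 := hrpos t ht
    have h2 := hr_sq t ht
    simp only [hu_def, hv_def, div_pow, h2]
    rw [← add_div]; exact div_self (ne_of_gt (hQpos t ht))
  -- derivatives of u and v
  have hderiv_u : ∀ t ∈ Ioo a b, HasDerivAt u (-(omg γ t) * v t) t := by
    intro t ht
    have hx'd : HasDerivAt x' (x'' t) t := ((hd2 t).hasDerivAt).fst
    have hy'd : HasDerivAt y' (y'' t) t := ((hd2 t).hasDerivAt).snd
    have hQd : HasDerivAt Q (2 * x' t * x'' t + 2 * y' t * y'' t) t := by
      have h := (hx'd.pow 2).add (hy'd.pow 2)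
      refine h.congr_deriv ?_
      ring
    have hrne := ne_of_gt (hrpos t ht)
    have hQne := ne_of_gt (hQpos t ht)
    have hrd : HasDerivAt r ((x' t * x'' t + y' t * y'' t) / r t) t := by
      have h := (Real.hasDerivAt_sqrt hQne).comp t hQd
      refine h.congr_deriv ?_
      simp only [hr_def]
      have hsne : Real.sqrt (Q t) ≠ 0 := Real.sqrt_ne_zero'.mpr (hQpos t ht)
      field_simp
    have hud : HasDerivAt u ((x'' t * r t - x' t * ((x' t * x'' t + y' t * y'' t) / r t)) / r t ^ 2) t :=
      hx'd.div hrd hrne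
    convert hud using 1
    rw [homg_eq]
    have hQ2 : Q t = r t ^ 2 := (hr_sq t ht).symm
    rw [hQ2]
    simp only [hv_def]
    have hQ2' : r t ^ 2 = x' t ^ 2 + y' t ^ 2 := hr_sq t ht
    field_simp
    linear_combination (-(x'' t)) * hQ2'
  have hderiv_v : ∀ t ∈ Ioo a b, HasDerivAt v (omg γ t * u t) t := by
    intro t ht
    have hx'd : HasDerivAt x' (x'' t) t := ((hd2 t).hasDerivAt).fst
    have hy'd : HasDerivAt y' (y'' t) t := ((hd2 t).hasDerivAt).snd
    have hQd : HasDerivAt Q (2 * x' t * x'' t + 2 * y' t * y'' t) t := by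
      have h := (hx'd.pow 2).add (hy'd.pow 2)
      refine h.congr_deriv ?_
      ring
    have hrne := ne_of_gt (hrpos t ht)
    have hQne := ne_of_gt (hQpos t ht)
    have hrd : HasDerivAt r ((x' t * x'' t + y' t * y'' t) / r t) t := by
      have h := (Real.hasDerivAt_sqrt hQne).comp t hQd
      refine h.congr_deriv ?_
      simp only [hr_def]
      have hsne : Real.sqrt (Q t) ≠ 0 := Real.sqrt_ne_zero'.mpr (hQpos t ht)
      field_simp
    have hvd : HasDerivAt v ((y'' t * r t - y' t * ((x' t * x'' t + y' t * y'' t) / r t)) / r t ^ 2) t :=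
      hy'd.div hrd hrne
    convert hvd using 1
    rw [homg_eq]
    have hQ2 : Q t = r t ^ 2 := (hr_sq t ht).symm
    rw [hQ2]
    simp only [hu_def]
    have hQ2' : r t ^ 2 = x' t ^ 2 + y' t ^ 2 := hr_sq t ht
    field_simp
    linear_combination (-(y'' t)) * hQ2'
  -- choice of initial angle
  have huv0 : u 0 ^ 2 + v 0 ^ 2 = 1 := huv_sq 0 h0ab
  obtain ⟨φ₀, hφc, hφs⟩ : ∃ φ₀ : ℝ, Real.cos φ₀ = u 0 ∧ Real.sin φ₀ = v 0 := by
    set z : ℂ := ⟨u 0, v 0⟩ with hz_def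
    have habs : ‖z‖ = 1 := by
      rw [Complex.norm_def, Complex.normSq_mk]
      rw [show u 0 * u 0 + v 0 * v 0 = 1 by nlinarith]
      simp
    have hz0 : z ≠ 0 := by
      intro h
      rw [h] at habs
      simp at habs
    refine ⟨z.arg, ?_, ?_⟩
    · rw [Complex.cos_arg hz0, habs]; simp [hz_def]
    · rw [Complex.sin_arg, habs]; simp [hz_def]
  set θ : ℝ → ℝ := th γ φ₀ with hθ_def
  have hθ0 : θ 0 = φ₀ := by simp [hθ_def, th]
  -- the function f = u cos θ + v sin θ is constant 1
  have hf_const : ∀ t ∈ Ioo a b, u t * Real.cos (θ t) + v t * Real.sin (θ t) = 1 := by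
    set f : ℝ → ℝ := fun t => u t * Real.cos (θ t) + v t * Real.sin (θ t) with hf_def
    have hfd : ∀ t ∈ Ioo a b, HasDerivWithinAt f 0 (Ioo a b) t := by
      intro t ht
      have hθd : HasDerivAt θ (omg γ t) t := hth_deriv φ₀ t ht
      have h1 : HasDerivAt f ((-(omg γ t) * v t) * Real.cos (θ t) +
          u t * (-Real.sin (θ t) * omg γ t) +
          ((omg γ t * u t) * Real.sin (θ t) + v t * (Real.cos (θ t) * omg γ t))) t :=
        (((hderiv_u t ht).mul hθd.cos).add ((hderiv_v t ht).mul hθd.sin))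
      have h2 : (-(omg γ t) * v t) * Real.cos (θ t) + u t * (-Real.sin (θ t) * omg γ t) +
          ((omg γ t * u t) * Real.sin (θ t) + v t * (Real.cos (θ t) * omg γ t)) = 0 := by ring
      rw [h2] at h1
      exact h1.hasDerivWithinAt
    intro t ht
    have h := (convex_Ioo a b).norm_image_sub_le_of_norm_hasDerivWithin_le
      (f' := fun _ => (0:ℝ)) hfd (fun x _ => le_refl ‖(0:ℝ)‖) h0ab ht
    simp only [norm_zero, zero_mul, Real.norm_eq_abs] at h
    have hf0 : f 0 = 1 := by
      simp only [hf_def, hθ0, hφc, hφs]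
      nlinarith
    have h9 : |f t - f 0| = 0 := le_antisymm h (abs_nonneg (f t - f 0))
    have h10 := sub_eq_zero.mp (abs_eq_zero.mp h9)
    rw [hf0] at h10
    exact h10
  -- representation of the derivative components
  have hrep : ∀ t ∈ Ioo a b, x' t = r t * Real.cos (θ t) ∧ y' t = r t * Real.sin (θ t) := by
    intro t ht
    have h1 := hf_const t ht
    have h2 := huv_sq t ht
    have hcs : Real.cos (θ t) ^ 2 + Real.sin (θ t) ^ 2 = 1 := by
      rw [← Real.sin_sq_add_cos_sq (θ t)]; ring
    have hu_eq : u t = Real.cos (θ t) ∧ v t = Real.sin (θ t) := by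
      constructor <;> nlinarith [sq_nonneg (u t - Real.cos (θ t)), sq_nonneg (v t - Real.sin (θ t))]
    have hrne := ne_of_gt (hrpos t ht)
    constructor
    · have : x' t / r t = Real.cos (θ t) := hu_eq.1
      field_simp at this
      linarith [this]
    · have : y' t / r t = Real.sin (θ t) := hu_eq.2
      field_simp at this
      linarith [this]
  have hrc : Continuous r := Real.continuous_sqrt.comp hQc
  have hθcont : ContinuousOn θ (Ioo a b) :=
    fun t ht => ((hth_deriv φ₀ t ht).continuousAt).continuousWithinAt
  have hIccIoo : Icc (0:ℝ) 1 ⊆ Ioo a b := hab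
  have huIcc : uIcc (0:ℝ) 1 = Icc 0 1 := uIcc_of_le zero_le_one
  -- fundamental theorem of calculus for the components
  have hx'Int : ∫ t in (0:ℝ)..1, x' t = 1 := by
    have h := intervalIntegral.integral_eq_sub_of_hasDerivAt
      (f := fun s => (γ s).1) (f' := x')
      (fun t _ => ((hd1 t).hasDerivAt).fst) (hx'c.intervalIntegrable 0 1)
    rw [h]
    show (γ 1).1 - (γ 0).1 = 1
    rw [hx0, hx1]; ring
  have hy'Int : ∫ t in (0:ℝ)..1, y' t = 0 := by
    have h := intervalIntegral.integral_eq_sub_of_hasDerivAt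
      (f := fun s => (γ s).2) (f' := y')
      (fun t _ => ((hd1 t).hasDerivAt).snd) (hy'c.intervalIntegrable 0 1)
    rw [h]
    show (γ 1).2 - (γ 0).2 = 0
    rw [← hy]; ring
  have hcosInt : ∫ t in (0:ℝ)..1, r t * Real.cos (θ t) = 1 := by
    have hcg : ∫ t in (0:ℝ)..1, r t * Real.cos (θ t) = ∫ t in (0:ℝ)..1, x' t := by
      apply intervalIntegral.integral_congr
      intro t ht
      rw [huIcc] at ht
      exact ((hrep t (hIccIoo ht)).1).symm
    exact hcg.trans hx'Int
  have hsinInt : ∫ t in (0:ℝ)..1, r t * Real.sin (θ t) = 0 := by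
    have hcg : ∫ t in (0:ℝ)..1, r t * Real.sin (θ t) = ∫ t in (0:ℝ)..1, y' t := by
      apply intervalIntegral.integral_congr
      intro t ht
      rw [huIcc] at ht
      exact ((hrep t (hIccIoo ht)).2).symm
    exact hcg.trans hy'Int
  -- periodicity of the angle
  have hr01 : r 0 = r 1 := by
    simp only [hr_def, hQ_def, hx'_def, hy'_def, hdper]
  have hcosper : Real.cos (θ 0) = Real.cos (θ 1) := by
    have h0 := (hrep 0 h0ab).1
    have h1 := (hrep 1 h1ab).1
    have hx'01 : x' 0 = x' 1 := by simp only [hx'_def, hdper]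
    rw [h0, h1, ← hr01] at hx'01
    exact mul_left_cancel₀ (ne_of_gt (hrpos 0 h0ab)) hx'01
  have hsinper : Real.sin (θ 0) = Real.sin (θ 1) := by
    have h0 := (hrep 0 h0ab).2
    have h1 := (hrep 1 h1ab).2
    have hy'01 : y' 0 = y' 1 := by simp only [hy'_def, hdper]
    rw [h0, h1, ← hr01] at hy'01
    exact mul_left_cancel₀ (ne_of_gt (hrpos 0 h0ab)) hy'01
  obtain ⟨n, hn⟩ : ∃ n : ℤ, θ 1 = θ 0 + n * (2 * π) := by
    have h : Complex.exp ((θ 1 : ℂ) * Complex.I) = Complex.exp ((θ 0 : ℂ) * Complex.I) := by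
      rw [Complex.exp_mul_I, Complex.exp_mul_I]
      rw [← Complex.ofReal_cos, ← Complex.ofReal_sin,
        ← Complex.ofReal_cos, ← Complex.ofReal_sin, hcosper, hsinper]
    rw [Complex.exp_eq_exp_iff_exists_int] at h
    obtain ⟨m, hm⟩ := h
    refine ⟨m, ?_⟩
    have := congrArg Complex.im hm
    simpa using this
  -- integrability of |omg|
  have habs_int : ∀ s w : ℝ, s ∈ Ioo a b → w ∈ Ioo a b →
      IntervalIntegrable (fun t => |omg γ t|) volume s w := by
    intro s w hs hw
    apply ContinuousOn.intervalIntegrable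
    refine (homg_contOn.abs).mono (fun z hz => ?_)
    rcases le_total s w with h | h
    · rw [uIcc_of_le h] at hz
      exact ⟨lt_of_lt_of_le hs.1 hz.1, lt_of_le_of_lt hz.2 hw.2⟩
    · rw [uIcc_of_ge h] at hz
      exact ⟨lt_of_lt_of_le hw.1 hz.1, lt_of_le_of_lt hz.2 hs.2⟩
  -- suppose total turning ≤ π
  by_contra hKcon
  push_neg at hKcon
  set K : ℝ := ∫ t in (0:ℝ)..1, |omg γ t| with hK_def
  have hθdiff : ∀ s w : ℝ, s ∈ Ioo a b → w ∈ Ioo a b → θ w - θ s = ∫ t in s..w, omg γ t := by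
    intro s w hs hw
    simp only [hθ_def, th]
    rw [add_sub_add_left_eq_sub,
      intervalIntegral.integral_interval_sub_left (homg_int 0 w h0ab hw) (homg_int 0 s h0ab hs)]
  -- n = 0 and θ 1 = θ 0
  have hKnonneg : 0 ≤ K := intervalIntegral.integral_nonneg zero_le_one (fun t _ => abs_nonneg _)
  have hn0 : n = 0 := by
    have h1 : |θ 1 - θ 0| ≤ K := by
      rw [hθdiff 0 1 h0ab h1ab]
      exact intervalIntegral.abs_integral_le_integral_abs zero_le_one
    rw [hn] at h1
    simp only [add_sub_cancel_left] at h1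
    rw [abs_mul] at h1
    have hπ := Real.pi_pos
    have h2 : |(n:ℝ)| < 1 := by
      have : |(2:ℝ) * π| = 2 * π := abs_of_pos (by linarith)
      rw [this] at h1
      nlinarith [abs_nonneg (n:ℝ)]
    have h3 := abs_lt.mp h2
    have h4 : (-1:ℝ) < (n:ℝ) := h3.1
    have h5 : (n:ℝ) < 1 := h3.2
    have h6 : (-1:ℤ) < n := by exact_mod_cast h4
    have h7 : n < (1:ℤ) := by exact_mod_cast h5
    omega
  have hθper : θ 1 = θ 0 := by rw [hn0] at hn; simpa using hn
  -- key oscillation bound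
  have key : ∀ s w : ℝ, 0 ≤ s → s ≤ w → w ≤ 1 → |θ w - θ s| ≤ π / 2 := by
    intro s w h0s hsw hw1
    have hsm : s ∈ Ioo a b := hIccIoo ⟨h0s, le_trans hsw hw1⟩
    have hwm : w ∈ Ioo a b := hIccIoo ⟨le_trans h0s hsw, hw1⟩
    have hint0s := homg_int 0 s h0ab hsm
    have hintsw := homg_int s w hsm hwm
    have hintw1 := homg_int w 1 hwm h1ab
    have habs0s := habs_int 0 s h0ab hsm
    have habssw := habs_int s w hsm hwm
    have habsw1 := habs_int w 1 hwm h1ab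
    have hA : |θ w - θ s| ≤ ∫ t in s..w, |omg γ t| := by
      rw [hθdiff s w hsm hwm]
      exact intervalIntegral.abs_integral_le_integral_abs hsw
    have hsplit : (∫ t in (0:ℝ)..s, omg γ t) + (∫ t in s..w, omg γ t) + (∫ t in w..1, omg γ t)
        = ∫ t in (0:ℝ)..1, omg γ t := by
      rw [intervalIntegral.integral_add_adjacent_intervals hint0s hintsw]
      exact intervalIntegral.integral_add_adjacent_intervals (hint0s.trans hintsw) hintw1
    have hKsplit : (∫ t in (0:ℝ)..s, |omg γ t|) + (∫ t in s..w, |omg γ t|)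
        + (∫ t in w..1, |omg γ t|) = K := by
      rw [intervalIntegral.integral_add_adjacent_intervals habs0s habssw]
      exact intervalIntegral.integral_add_adjacent_intervals (habs0s.trans habssw) habsw1
    have hzero : (∫ t in (0:ℝ)..1, omg γ t) = 0 := by
      have := hθdiff 0 1 h0ab h1ab
      rw [hθper] at this
      linarith [this]
    have hB : |θ w - θ s| ≤ (∫ t in (0:ℝ)..s, |omg γ t|) + (∫ t in w..1, |omg γ t|) := by
      rw [hθdiff s w hsm hwm]
      have heq : (∫ t in s..w, omg γ t)
          = -((∫ t in (0:ℝ)..s, omg γ t) + (∫ t in w..1, omg γ t)) := by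
        linarith [hsplit, hzero]
      rw [heq]
      calc |-((∫ t in (0:ℝ)..s, omg γ t) + (∫ t in w..1, omg γ t))|
          ≤ |∫ t in (0:ℝ)..s, omg γ t| + |∫ t in w..1, omg γ t| := by
            rw [abs_neg]; exact abs_add_le _ _
        _ ≤ (∫ t in (0:ℝ)..s, |omg γ t|) + (∫ t in w..1, |omg γ t|) :=
            add_le_add (intervalIntegral.abs_integral_le_integral_abs h0s)
              (intervalIntegral.abs_integral_le_integral_abs hw1)
    linarith [hA, hB, hKsplit, hKcon]
  have htt : ∀ t ∈ Icc (0:ℝ) 1, |θ t - θ t₀| ≤ π / 2 := by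
    intro t ht
    rcases le_total t t₀ with h | h
    · rw [abs_sub_comm]
      exact key t t₀ ht.1 h ht₀.2
    · exact key t₀ t ht₀.1 h ht.2
  -- cos (θ t₀) ≤ 0
  have ht₀m : t₀ ∈ Ioo a b := hIccIoo ht₀
  have ht₀cos : Real.cos (θ t₀) ≤ 0 := by
    have h := (hrep t₀ ht₀m).1
    have hrp := hrpos t₀ ht₀m
    nlinarith [ht₀']
  -- the integrand cos (θ t - θ t₀) * r t
  set g : ℝ → ℝ := fun t => Real.cos (θ t - θ t₀) * r t with hg_def
  have hg_nonneg : ∀ t ∈ Icc (0:ℝ) 1, 0 ≤ g t := by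
    intro t ht
    apply mul_nonneg _ (hrpos t (hIccIoo ht)).le
    apply Real.cos_nonneg_of_mem_Icc
    have := abs_le.mp (htt t ht)
    exact ⟨this.1, this.2⟩
  have hg_contOn : ContinuousOn g (Ioo a b) :=
    (Real.continuous_cos.comp_continuousOn (hθcont.sub continuousOn_const)).mul hrc.continuousOn
  have hg_int : IntervalIntegrable g volume 0 1 := by
    apply ContinuousOn.intervalIntegrable
    exact hg_contOn.mono (by rw [huIcc]; exact hIccIoo)
  -- its value
  have hrcos_int : IntervalIntegrable (fun t => r t * Real.cos (θ t)) volume 0 1 := by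
    apply ContinuousOn.intervalIntegrable
    exact (hrc.continuousOn.mul (Real.continuous_cos.comp_continuousOn hθcont)).mono
      (by rw [huIcc]; exact hIccIoo)
  have hrsin_int : IntervalIntegrable (fun t => r t * Real.sin (θ t)) volume 0 1 := by
    apply ContinuousOn.intervalIntegrable
    exact (hrc.continuousOn.mul (Real.continuous_sin.comp_continuousOn hθcont)).mono
      (by rw [huIcc]; exact hIccIoo)
  have hgval : ∫ t in (0:ℝ)..1, g t = Real.cos (θ t₀) := by
    have hcg : ∫ t in (0:ℝ)..1, g t = ∫ t in (0:ℝ)..1,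
        (Real.cos (θ t₀) * (r t * Real.cos (θ t)) + Real.sin (θ t₀) * (r t * Real.sin (θ t))) := by
      apply intervalIntegral.integral_congr
      intro t _
      simp only [hg_def]
      rw [Real.cos_sub]
      ring
    rw [hcg, intervalIntegral.integral_add (hrcos_int.const_mul _) (hrsin_int.const_mul _),
      intervalIntegral.integral_const_mul, intervalIntegral.integral_const_mul,
      hcosInt, hsinInt]
    ring
  -- positivity of the integral
  have hgt₀pos : 0 < g t₀ := by
    simp only [hg_def, sub_self, Real.cos_zero, one_mul]
    exact hrpos t₀ ht₀m
  have hg_contAt : ContinuousAt g t₀ := hg_contOn.continuousAt (isOpen_Ioo.mem_nhds ht₀m)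
  obtain ⟨ρ, hρ, hball⟩ : ∃ ρ > 0, ∀ s : ℝ, dist s t₀ < ρ → 0 < g s := by
    have h := hg_contAt.eventually (eventually_gt_nhds hgt₀pos)
    rw [Metric.eventually_nhds_iff] at h
    obtain ⟨ρ, hρ, h⟩ := h
    exact ⟨ρ, hρ, fun s hs => h hs⟩
  set c : ℝ := max (t₀ - ρ) 0 with hc_def
  set d : ℝ := min (t₀ + ρ) 1 with hd_def
  have hcd : c < d := by
    apply max_lt <;> apply lt_min
    · linarith
    · linarith [ht₀.2]
    · linarith [ht₀.1]
    · linarith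
  have hsubset : Ioo c d ⊆ Function.support g ∩ Ioc 0 1 := by
    intro z hz
    constructor
    · apply ne_of_gt
      apply hball
      rw [Real.dist_eq, abs_lt]
      constructor
      · have : t₀ - ρ ≤ c := le_max_left _ _
        linarith [hz.1]
      · have : d ≤ t₀ + ρ := min_le_left _ _
        linarith [hz.2]
    · constructor
      · have : (0:ℝ) ≤ c := le_max_right _ _
        linarith [hz.1]
      · have : d ≤ 1 := min_le_right _ _
        linarith [hz.2]
  have hpos : 0 < ∫ t in (0:ℝ)..1, g t := by
    rw [intervalIntegral.integral_pos_iff_support_of_nonneg_ae']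
    · refine ⟨zero_lt_one, ?_⟩
      have h1 : volume (Ioo c d) ≤ volume (Function.support g ∩ Ioc 0 1) :=
        measure_mono hsubset
      rw [Real.volume_Ioo] at h1
      have : (0:ENNReal) < ENNReal.ofReal (d - c) := by
        rw [ENNReal.ofReal_pos]; linarith
      exact lt_of_lt_of_le this h1
    · rw [uIoc_of_le zero_le_one]
      exact ae_restrict_of_forall_mem measurableSet_Ioc (fun t ht => hg_nonneg t ⟨ht.1.le, ht.2⟩)
    · exact hg_int
  linarith [hgval, hpos, ht₀cos]


set_option maxHeartbeats 1000000 in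
theorem energy_gt (ψ : ℝ → ℝ) (hψ : Continuous ψ) (α ε : ℝ) (hα : 0 < α) (hα1 : α < 1)
    (hε : 0 < ε) (γ : ℝ → ℝ × ℝ) (hadm : Admissible ψ γ) (hng : ¬ IsGraph γ) :
    2 * π * ε * Real.sqrt α < Energy ψ α ε γ := by
  obtain ⟨hC2, hne, hsub, hx0, hx1, hy, hdper⟩ := hadm
  -- non-graph point
  obtain ⟨t₀, ht₀, ht₀'⟩ : ∃ t₀ ∈ Icc (0:ℝ) 1, (deriv γ t₀).1 ≤ 0 := by
    rw [IsGraph] at hng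
    push_neg at hng
    obtain ⟨t₀, ht₀, h⟩ := hng
    exact ⟨t₀, ht₀, h⟩
  have hπK := turning_gt_pi γ hC2 hne hx0 hx1 hy hdper t₀ ht₀ ht₀'
  -- regularity
  have hreg : Differentiable ℝ γ ∧ Differentiable ℝ (deriv γ) ∧ Continuous (deriv (deriv γ)) := by
    rw [show (2 : WithTop ℕ∞) = 1 + 1 from rfl, contDiff_succ_iff_deriv] at hC2
    obtain ⟨h1, -, h2⟩ := hC2
    rw [contDiff_one_iff_deriv] at h2
    exact ⟨h1, h2.1, h2.2⟩
  obtain ⟨hd1, hd2, hc2⟩ := hreg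
  have hc1 : Continuous (deriv γ) := hd2.continuous
  set rs : ℝ → ℝ := fun t => ‖deriv γ t‖ with hrs_def
  have hrs_cont : Continuous rs := hc1.norm
  have hrs_nonneg : ∀ t, 0 ≤ rs t := fun t => norm_nonneg _
  have hrs_pos : ∀ t ∈ Icc (0:ℝ) 1, 0 < rs t := fun t ht => norm_pos_iff.mpr (hne t ht)
  set x' : ℝ → ℝ := fun t => (deriv γ t).1 with hx'_def
  set y' : ℝ → ℝ := fun t => (deriv γ t).2 with hy'_def
  set N : ℝ → ℝ := fun t => (deriv γ t).1 * (deriv (deriv γ) t).2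
      - (deriv γ t).2 * (deriv (deriv γ) t).1 with hN_def
  have hNc : Continuous N := by
    apply Continuous.sub
    · exact (continuous_fst.comp hc1).mul (continuous_snd.comp hc2)
    · exact (continuous_snd.comp hc1).mul (continuous_fst.comp hc2)
  have hcurv_eq : ∀ t, curvature γ t = N t / rs t ^ 3 := fun t => rfl
  have hcurv_contOn : ContinuousOn (curvature γ) (Icc (0:ℝ) 1) := by
    apply ContinuousOn.div hNc.continuousOn ((hrs_cont.pow 3).continuousOn)
    intro t ht
    exact pow_ne_zero _ (ne_of_gt (hrs_pos t ht))
  -- pointwise: |omg| ≤ |curvature| * rs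
  have hQpos : ∀ t ∈ Icc (0:ℝ) 1, 0 < x' t ^ 2 + y' t ^ 2 := by
    intro t ht
    have h := hne t ht
    have : x' t ≠ 0 ∨ y' t ≠ 0 := by
      by_contra hcon
      push_neg at hcon
      exact h (Prod.ext hcon.1 hcon.2)
    rcases this with h' | h' <;> positivity
  have hrs_sq_le : ∀ t, rs t ^ 2 ≤ x' t ^ 2 + y' t ^ 2 := by
    intro t
    simp only [hrs_def, Prod.norm_def, Real.norm_eq_abs]
    rcases max_cases |(deriv γ t).1| |(deriv γ t).2| with ⟨h, -⟩ | ⟨h, -⟩ <;> rw [h] <;>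
      simp only [hx'_def, hy'_def, sq_abs] <;> nlinarith [sq_nonneg (deriv γ t).1, sq_nonneg (deriv γ t).2]
  have hbound : ∀ t ∈ Icc (0:ℝ) 1, |omg γ t| ≤ |curvature γ t| * rs t := by
    intro t ht
    have hQ := hQpos t ht
    have hr := hrs_pos t ht
    have h1 : |omg γ t| = |N t| / (x' t ^ 2 + y' t ^ 2) := by
      rw [show omg γ t = N t / (x' t ^ 2 + y' t ^ 2) from rfl, abs_div, abs_of_pos hQ]
    have h2 : |curvature γ t| * rs t = |N t| / rs t ^ 2 := by
      rw [hcurv_eq, abs_div, abs_of_pos (by positivity : (0:ℝ) < rs t ^ 3)]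
      field_simp
    rw [h1, h2]
    rw [div_le_div_iff₀ hQ (by positivity)]
    have := hrs_sq_le t
    nlinarith [abs_nonneg (N t)]
  -- interval integrable facts
  have huIcc : uIcc (0:ℝ) 1 = Icc 0 1 := uIcc_of_le zero_le_one
  have homg_contOn : ContinuousOn (omg γ) (Icc (0:ℝ) 1) := by
    apply ContinuousOn.div hNc.continuousOn
      (((continuous_fst.comp hc1).pow 2).add ((continuous_snd.comp hc1).pow 2)).continuousOn
    intro t ht
    exact ne_of_gt (hQpos t ht)
  have habs_int : IntervalIntegrable (fun t => |omg γ t|) volume 0 1 := by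
    apply ContinuousOn.intervalIntegrable
    rw [huIcc]
    exact homg_contOn.abs
  have hcr_int : IntervalIntegrable (fun t => |curvature γ t| * rs t) volume 0 1 := by
    apply ContinuousOn.intervalIntegrable
    rw [huIcc]
    exact hcurv_contOn.abs.mul hrs_cont.continuousOn
  have hc2r_int : IntervalIntegrable (fun t => curvature γ t ^ 2 * rs t) volume 0 1 := by
    apply ContinuousOn.intervalIntegrable
    rw [huIcc]
    exact (hcurv_contOn.pow 2).mul hrs_cont.continuousOn
  have hrs_int : IntervalIntegrable rs volume 0 1 := hrs_cont.intervalIntegrable 0 1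
  -- K ≤ Ks
  set K : ℝ := ∫ t in (0:ℝ)..1, |omg γ t| with hK_def
  set Ks : ℝ := ∫ t in (0:ℝ)..1, |curvature γ t| * rs t with hKs_def
  have hKKs : K ≤ Ks := by
    apply intervalIntegral.integral_mono_on zero_le_one habs_int hcr_int
    exact hbound
  have hπKs : π < Ks := lt_of_lt_of_le hπK hKKs
  -- length
  set L : ℝ := ∫ t in (0:ℝ)..1, rs t with hL_def
  have hx'Int : ∫ t in (0:ℝ)..1, x' t = 1 := by
    have h := intervalIntegral.integral_eq_sub_of_hasDerivAt
      (f := fun s => (γ s).1) (f' := x')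
      (fun t _ => ((hd1 t).hasDerivAt).fst) (((continuous_fst.comp hc1)).intervalIntegrable 0 1)
    rw [h]
    show (γ 1).1 - (γ 0).1 = 1
    rw [hx0, hx1]; ring
  have hL1 : 1 ≤ L := by
    rw [← hx'Int]
    apply intervalIntegral.integral_mono_on zero_le_one
      ((continuous_fst.comp hc1).intervalIntegrable 0 1) hrs_int
    intro t _
    calc x' t ≤ |x' t| := le_abs_self _
      _ ≤ rs t := by
        rw [show |x' t| = ‖(deriv γ t).1‖ from rfl]
        exact norm_fst_le (deriv γ t)
  have hL0 : (0:ℝ) < L := lt_of_lt_of_le zero_lt_one hL1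
  -- Cauchy–Schwarz
  have hCS : Ks ^ 2 ≤ (∫ t in (0:ℝ)..1, curvature γ t ^ 2 * rs t) * L := by
    set lam : ℝ := Ks / L with hlam_def
    have h0 : (0:ℝ) ≤ ∫ t in (0:ℝ)..1,
        (|curvature γ t| * Real.sqrt (rs t) - lam * Real.sqrt (rs t)) ^ 2 :=
      intervalIntegral.integral_nonneg zero_le_one (fun t _ => sq_nonneg _)
    have hptw : ∀ t ∈ uIcc (0:ℝ) 1,
        (|curvature γ t| * Real.sqrt (rs t) - lam * Real.sqrt (rs t)) ^ 2
        = curvature γ t ^ 2 * rs t - 2 * lam * (|curvature γ t| * rs t) + lam ^ 2 * rs t := by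
      intro t _
      have hss : Real.sqrt (rs t) ^ 2 = rs t := Real.sq_sqrt (hrs_nonneg t)
      calc (|curvature γ t| * Real.sqrt (rs t) - lam * Real.sqrt (rs t)) ^ 2
          = |curvature γ t| ^ 2 * (Real.sqrt (rs t) ^ 2)
            - 2 * lam * (|curvature γ t| * Real.sqrt (rs t) ^ 2)
            + lam ^ 2 * Real.sqrt (rs t) ^ 2 := by ring
        _ = curvature γ t ^ 2 * rs t - 2 * lam * (|curvature γ t| * rs t) + lam ^ 2 * rs t := by
            rw [hss, sq_abs]
    rw [intervalIntegral.integral_congr hptw] at h0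
    rw [intervalIntegral.integral_add (hc2r_int.sub (hcr_int.const_mul (2 * lam)))
      (hrs_int.const_mul (lam ^ 2))] at h0
    rw [intervalIntegral.integral_sub hc2r_int (hcr_int.const_mul (2 * lam)),
      intervalIntegral.integral_const_mul, intervalIntegral.integral_const_mul] at h0
    rw [← hKs_def, ← hL_def] at h0
    have hlam : lam * L = Ks := by
      rw [hlam_def]; field_simp
    nlinarith [h0, hL0]
  -- decompose the energy
  have hIcc_eq : ∀ f : ℝ → ℝ, ∫ t in Icc (0:ℝ) 1, f t = ∫ t in (0:ℝ)..1, f t := by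
    intro f
    rw [intervalIntegral.integral_of_le zero_le_one, integral_Icc_eq_integral_Ioc]
  have hγcont : Continuous γ := hd1.continuous
  have hmeasΘ : Measurable (fun t => contactPotential ψ α (γ t)) := by
    apply Measurable.ite _ measurable_const measurable_const
    exact (isClosed_eq (continuous_snd.comp hγcont) (hψ.comp (continuous_fst.comp hγcont))).measurableSet
  have hΘ_bdd : ∀ t, α ≤ contactPotential ψ α (γ t) ∧ contactPotential ψ α (γ t) ≤ 1 := by
    intro t
    unfold contactPotential
    split <;> constructor <;> linarith
  have hΘr_int : IntegrableOn (fun t => contactPotential ψ α (γ t) * rs t) (Icc (0:ℝ) 1) := by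
    apply Integrable.mono' (hrs_cont.integrableOn_Icc)
    · exact ((hmeasΘ.mul hrs_cont.measurable).aestronglyMeasurable)
    · apply Filter.Eventually.of_forall
      intro t
      rw [Real.norm_eq_abs, abs_of_nonneg (mul_nonneg (by linarith [(hΘ_bdd t).1]) (hrs_nonneg t))]
      calc contactPotential ψ α (γ t) * rs t ≤ 1 * rs t :=
            mul_le_mul_of_nonneg_right (hΘ_bdd t).2 (hrs_nonneg t)
        _ = rs t := one_mul _
  have hc2r_intOn : IntegrableOn (fun t => ε ^ 2 * curvature γ t ^ 2 * rs t) (Icc (0:ℝ) 1) := by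
    apply ContinuousOn.integrableOn_Icc
    exact ((continuousOn_const.mul (hcurv_contOn.pow 2)).mul hrs_cont.continuousOn)
  have hEsplit : Energy ψ α ε γ = (∫ t in Icc (0:ℝ) 1, ε ^ 2 * curvature γ t ^ 2 * rs t)
      + ∫ t in Icc (0:ℝ) 1, contactPotential ψ α (γ t) * rs t := by
    rw [Energy, ← integral_add hc2r_intOn hΘr_int]
    apply setIntegral_congr_fun measurableSet_Icc
    intro t _
    show (ε ^ 2 * curvature γ t ^ 2 + contactPotential ψ α (γ t)) * rs t = _
    ring
  have hΘ_ge : α * L ≤ ∫ t in Icc (0:ℝ) 1, contactPotential ψ α (γ t) * rs t := by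
    have h1 : ∫ t in Icc (0:ℝ) 1, α * rs t ≤ ∫ t in Icc (0:ℝ) 1, contactPotential ψ α (γ t) * rs t := by
      apply setIntegral_mono_on ((hrs_cont.integrableOn_Icc).const_mul α) hΘr_int measurableSet_Icc
      intro t _
      exact mul_le_mul_of_nonneg_right (hΘ_bdd t).1 (hrs_nonneg t)
    calc α * L = ∫ t in Icc (0:ℝ) 1, α * rs t := by
          rw [hIcc_eq, intervalIntegral.integral_const_mul]
      _ ≤ _ := h1
  have hcurv_ge : ε ^ 2 * (Ks ^ 2 / L) ≤ ∫ t in Icc (0:ℝ) 1, ε ^ 2 * curvature γ t ^ 2 * rs t := by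
    have h1 : ∫ t in Icc (0:ℝ) 1, ε ^ 2 * curvature γ t ^ 2 * rs t
        = ε ^ 2 * ∫ t in (0:ℝ)..1, curvature γ t ^ 2 * rs t := by
      rw [hIcc_eq, ← intervalIntegral.integral_const_mul]
      apply intervalIntegral.integral_congr
      intro t _
      ring
    rw [h1]
    apply mul_le_mul_of_nonneg_left _ (sq_nonneg ε)
    rw [div_le_iff₀ hL0]
    exact hCS
  -- final arithmetic
  set s : ℝ := Real.sqrt α with hs_def
  have hs0 : 0 < s := Real.sqrt_pos.mpr hα
  have hs2 : s ^ 2 = α := Real.sq_sqrt hα.le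
  have hE_ge : ε ^ 2 * (Ks ^ 2 / L) + α * L ≤ Energy ψ α ε γ := by
    rw [hEsplit]
    exact add_le_add hcurv_ge hΘ_ge
  have hAM : 2 * ε * Ks * s ≤ ε ^ 2 * (Ks ^ 2 / L) + α * L := by
    rw [← sub_nonneg]
    have hID : (ε * Ks - s * L) ^ 2 = ε ^ 2 * Ks ^ 2 - 2 * ε * Ks * s * L + α * L ^ 2 := by
      linear_combination L ^ 2 * hs2
    have h3 : 0 ≤ ε ^ 2 * Ks ^ 2 - 2 * ε * Ks * s * L + α * L ^ 2 := by
      rw [← hID]; exact sq_nonneg _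
    have h4 : ε ^ 2 * (Ks ^ 2 / L) + α * L - 2 * ε * Ks * s
        = (ε ^ 2 * Ks ^ 2 - 2 * ε * Ks * s * L + α * L ^ 2) / L := by
      field_simp
      ring
    rw [h4]
    exact div_nonneg h3 hL0.le
  have hfin : 2 * π * ε * s < 2 * ε * Ks * s := by
    have h := mul_pos (mul_pos (sub_pos.mpr hπKs) hε) hs0
    nlinarith [h]
  linarith [hE_ge, hAM, hfin]

theorem line_competitor (ψ : ℝ → ℝ) (hψ : Continuous ψ) (α ε : ℝ) (hα : 0 < α) (hα1 : α < 1) :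
    ∃ ℓ : ℝ → ℝ × ℝ, Admissible ψ ℓ ∧ Energy ψ α ε ℓ ≤ 1 := by
  obtain ⟨x₀, hx₀, hmax⟩ := isCompact_Icc.exists_isMaxOn (nonempty_Icc.mpr zero_le_one)
    (hψ.continuousOn (s := Icc (0:ℝ) 1))
  set M : ℝ := ψ x₀ + 1 with hM_def
  set ℓ : ℝ → ℝ × ℝ := fun t => (t, M) with hℓ_def
  have hd : ∀ t : ℝ, HasDerivAt ℓ (1, 0) t := fun t =>
    (hasDerivAt_id t).prodMk (hasDerivAt_const t M)
  have hderiv : deriv ℓ = fun _ => ((1:ℝ), (0:ℝ)) := funext fun t => (hd t).deriv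
  have hne10 : ((1:ℝ), (0:ℝ)) ≠ (0 : ℝ × ℝ) := by
    simp [Prod.ext_iff]
  have hAdm : Admissible ψ ℓ := by
    refine ⟨?_, ?_, ?_, rfl, rfl, rfl, by rw [hderiv]⟩
    · exact contDiff_id.prodMk contDiff_const
    · intro t _
      rw [hderiv]
      exact hne10
    · intro t ht
      have hm : ψ t ≤ ψ x₀ := hmax ht
      show ψ t ≤ M
      rw [hM_def]
      linarith
  have hcurv : ∀ t : ℝ, curvature ℓ t = 0 := by
    intro t
    have h2 : deriv (deriv ℓ) t = 0 := by
      rw [hderiv]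
      simp
    show ((deriv ℓ t).1 * (deriv (deriv ℓ) t).2 - (deriv ℓ t).2 * (deriv (deriv ℓ) t).1)
      / ‖deriv ℓ t‖ ^ 3 = 0
    rw [h2]
    simp
  have hnorm : ∀ t : ℝ, ‖deriv ℓ t‖ = 1 := by
    intro t
    rw [hderiv]
    simp [Prod.norm_def]
  have hΘ_le : ∀ t : ℝ, contactPotential ψ α (ℓ t) ≤ 1 := by
    intro t
    unfold contactPotential
    split <;> linarith
  have hΘ_pos : ∀ t : ℝ, 0 ≤ contactPotential ψ α (ℓ t) := by
    intro t
    unfold contactPotential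
    split <;> linarith
  have hmeasΘ : Measurable (fun t => contactPotential ψ α (ℓ t)) := by
    have heq : (fun t => contactPotential ψ α (ℓ t)) = fun t : ℝ => if M = ψ t then α else 1 := rfl
    rw [heq]
    apply Measurable.ite _ measurable_const measurable_const
    exact (isClosed_eq continuous_const hψ).measurableSet
  have hint : IntegrableOn (fun t => contactPotential ψ α (ℓ t)) (Icc (0:ℝ) 1) := by
    apply Integrable.mono' (integrableOn_const (C := (1:ℝ)) (by simp [Real.volume_Icc]))
    · exact hmeasΘ.aestronglyMeasurable
    · apply Filter.Eventually.of_forall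
      intro t
      rw [Real.norm_eq_abs, abs_of_nonneg (hΘ_pos t)]
      exact hΘ_le t
  refine ⟨ℓ, hAdm, ?_⟩
  have hE : Energy ψ α ε ℓ = ∫ t in Icc (0:ℝ) 1, contactPotential ψ α (ℓ t) := by
    rw [Energy]
    apply setIntegral_congr_fun measurableSet_Icc
    intro t _
    show (ε ^ 2 * curvature ℓ t ^ 2 + contactPotential ψ α (ℓ t)) * ‖deriv ℓ t‖
      = contactPotential ψ α (ℓ t)
    rw [hcurv t, hnorm t]
    ring
  rw [hE]
  calc ∫ t in Icc (0:ℝ) 1, contactPotential ψ α (ℓ t)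
      ≤ ∫ _t in Icc (0:ℝ) 1, (1:ℝ) := by
        apply setIntegral_mono_on hint (integrableOn_const (by simp [Real.volume_Icc]))
          measurableSet_Icc
        intro t _
        exact hΘ_le t
    _ = 1 := by simp [Real.volume_Icc]

theorem nongraph_amgm_bound (ψ : ℝ → ℝ) (hψ : Continuous ψ)
    (hper : Function.Periodic ψ 1) (α ε : ℝ) (hα : 0 < α) (hα1 : α < 1) (hε : 0 < ε) :
    (∀ γ : ℝ → ℝ × ℝ, Admissible ψ γ → ¬ IsGraph γ →
      2 * π * ε * Real.sqrt α < Energy ψ α ε γ) ∧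
    (4 * ε ^ 2 * α ≥ 1 → ∀ γ : ℝ → ℝ × ℝ, Admissible ψ γ →
      (∀ γ' : ℝ → ℝ × ℝ, Admissible ψ γ' → Energy ψ α ε γ ≤ Energy ψ α ε γ') →
      IsGraph γ) := by
  constructor
  · intro γ hadm hng
    exact energy_gt ψ hψ α ε hα hα1 hε γ hadm hng
  · intro h4 γ hadm hmin
    by_contra hng
    have h1 := energy_gt ψ hψ α ε hα hα1 hε γ hadm hng
    obtain ⟨ℓ, hℓadm, hℓE⟩ := line_competitor ψ hψ α ε hα hα1
    have h2 := hmin ℓ hℓadm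
    have hs0 : 0 < Real.sqrt α := Real.sqrt_pos.mpr hα
    have hs2 : Real.sqrt α ^ 2 = α := Real.sq_sqrt hα.le
    have key : ε ^ 2 * Real.sqrt α ^ 2 = ε ^ 2 * α := by rw [hs2]
    have hw2 : (1:ℝ) ≤ (2 * ε * Real.sqrt α) ^ 2 := by nlinarith [key, h4]
    have hx : (1:ℝ) ≤ 2 * ε * Real.sqrt α := by
      nlinarith [hw2, mul_pos hε hs0]
    have hπ3 : (3:ℝ) < π := Real.pi_gt_three
    have h5 : π * 1 ≤ π * (2 * ε * Real.sqrt α) :=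
      mul_le_mul_of_nonneg_left hx Real.pi_pos.le
    have h3 : (1:ℝ) < 2 * π * ε * Real.sqrt α := by nlinarith [h5, hπ3]
    linarith [h1, h2, hℓE, h3]

end
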